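/- Let $\ell\ge 1$ be an integer, $\alpha>0$, and let $D$ be a directed graph on $n$ vertices with vertex set $V$ and arc set $A$ such that $(v,u)\in A$ whenever $(u,v)\in A$. Suppose that for all distinct $s,t\in V$ there are at least $\alpha n^{\ell-1}$ directed paths of length $\ell$ from $s$ to $t$ in $D$. Let $\beta>0$ and let $\xi\colon V\to[-\beta,\beta]$ satisfy $\sum_{v\in V}\xi(v)=0$. Then there exists a function $\eta\colon A\to[0, 2\beta\ell/(\alpha n)]$ such that for every vertex $v$, $\xi(v)+\sum_{u:(u,v)\in A}\eta(u,v)-\sum_{u:(v,u)\in A}\eta(v,u)=0$. -/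

import Mathlib

open Finset

section aux
variable {V : Type} [Fintype V] [DecidableEq V]

/-- number of indices where `f` uses the arc `(u,v)`. -/
private def arcCount (ℓ : ℕ) (f : Fin (ℓ+1) → V) (u v : V) : ℕ :=
  (Finset.univ.filter (fun i : Fin ℓ => f i.castSucc = u ∧ f i.succ = v)).card

private abbrev PathT (ℓ : ℕ) (A : V → V → Prop) (s t : V) :=
  {f : Fin (ℓ + 1) → V // Function.Injective f ∧ f 0 = s ∧
    f (Fin.last ℓ) = t ∧ ∀ i : Fin ℓ, A (f i.castSucc) (f i.succ)}

private lemma arcCount_div (ℓ : ℕ) (f : Fin (ℓ+1) → V) (v : V) :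
    (∑ u, (arcCount ℓ f u v : ℝ)) - ∑ u, (arcCount ℓ f v u : ℝ)
      = (if f (Fin.last ℓ) = v then (1:ℝ) else 0) - (if f 0 = v then 1 else 0) := by
  have h1 : ∑ u, (arcCount ℓ f u v : ℝ) = ∑ i : Fin ℓ, if f i.succ = v then 1 else 0 := by
    simp only [arcCount, Finset.card_filter]
    push_cast
    rw [Finset.sum_comm]
    refine Finset.sum_congr rfl fun i _ => ?_
    simp [ite_and, Finset.sum_ite_eq]
  have h2 : ∑ u, (arcCount ℓ f v u : ℝ) = ∑ i : Fin ℓ, if f i.castSucc = v then 1 else 0 := by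
    simp only [arcCount, Finset.card_filter]
    push_cast
    rw [Finset.sum_comm]
    refine Finset.sum_congr rfl fun i _ => ?_
    rw [Finset.sum_congr rfl (fun u _ => if_congr and_comm rfl rfl)]
    simp [ite_and, Finset.sum_ite_eq]
  have h3 := Fin.sum_univ_succ (fun k : Fin (ℓ+1) => if f k = v then (1:ℝ) else 0)
  have h4 := Fin.sum_univ_castSucc (fun k : Fin (ℓ+1) => if f k = v then (1:ℝ) else 0)
  rw [h1, h2]
  rw [h3] at h4
  linarith


private lemma count_bound (ℓ : ℕ) (A : V → V → Prop)
    [∀ s t : V, Fintype (PathT ℓ A s t)] (u v : V) :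
    ∑ s : V, ∑ t : V, ∑ f : PathT ℓ A s t, arcCount ℓ f.1 u v
      ≤ ℓ * Fintype.card V ^ (ℓ - 1) := by
  classical
  have step : ∀ s t : V, ∑ f : PathT ℓ A s t, arcCount ℓ f.1 u v
      = ∑ i : Fin ℓ, (Finset.univ.filter
          (fun f : PathT ℓ A s t => f.1 i.castSucc = u ∧ f.1 i.succ = v)).card := by
    intro s t
    simp only [arcCount, Finset.card_filter]
    rw [Finset.sum_comm]
  calc ∑ s : V, ∑ t : V, ∑ f : PathT ℓ A s t, arcCount ℓ f.1 u v
      = ∑ s : V, ∑ i : Fin ℓ, ∑ t : V, (Finset.univ.filter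
          (fun f : PathT ℓ A s t => f.1 i.castSucc = u ∧ f.1 i.succ = v)).card := by
        refine Finset.sum_congr rfl fun s _ => ?_
        rw [Finset.sum_congr rfl fun t _ => step s t, Finset.sum_comm]
    _ = ∑ i : Fin ℓ, ∑ s : V, ∑ t : V, (Finset.univ.filter
          (fun f : PathT ℓ A s t => f.1 i.castSucc = u ∧ f.1 i.succ = v)).card :=
        Finset.sum_comm
    _ ≤ ∑ _i : Fin ℓ, Fintype.card V ^ (ℓ - 1) := by
        refine Finset.sum_le_sum fun i _ => ?_
        have hab : (i.castSucc : Fin (ℓ+1)) ≠ i.succ := (Fin.castSucc_lt_succ : i.castSucc < i.succ).ne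
        -- rewrite as a card of one sigma type
        have hcard1 : ∑ s : V, ∑ t : V, (Finset.univ.filter
            (fun f : PathT ℓ A s t => f.1 i.castSucc = u ∧ f.1 i.succ = v)).card
            = Fintype.card (Σ s : V, Σ t : V,
              {f : PathT ℓ A s t // f.1 i.castSucc = u ∧ f.1 i.succ = v}) := by
          simp [Fintype.card_sigma, Fintype.card_subtype]
        rw [hcard1]
        have hinj : Function.Injective
            (fun x : (Σ s : V, Σ t : V,
              {f : PathT ℓ A s t // f.1 i.castSucc = u ∧ f.1 i.succ = v}) =>
              (fun y : {x : Fin (ℓ+1) // x ≠ i.castSucc ∧ x ≠ i.succ} => x.2.2.1.1 y.1)) := by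
          rintro ⟨s₁, t₁, ⟨⟨f₁, hf₁⟩, hc₁⟩⟩ ⟨s₂, t₂, ⟨⟨f₂, hf₂⟩, hc₂⟩⟩ h
          have hf : f₁ = f₂ := by
            funext x
            by_cases hx1 : x = i.castSucc
            · subst hx1; exact hc₁.1.trans hc₂.1.symm
            · by_cases hx2 : x = i.succ
              · subst hx2; exact hc₁.2.trans hc₂.2.symm
              · exact congrFun h ⟨x, hx1, hx2⟩
          subst hf
          have hs : s₁ = s₂ := by rw [← hf₁.2.1, ← hf₂.2.1]
          have ht : t₁ = t₂ := by rw [← hf₁.2.2.1, ← hf₂.2.2.1]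
          subst hs; subst ht; rfl
        have := Fintype.card_le_of_injective _ hinj
        refine this.trans (le_of_eq ?_)
        rw [Fintype.card_fun]
        congr 1
        rw [Fintype.card_subtype]
        have hfe : (Finset.univ.filter
            (fun x : Fin (ℓ+1) => x ≠ i.castSucc ∧ x ≠ i.succ))
            = Finset.univ \ {i.castSucc, i.succ} := by
          ext x; simp [not_or]
        rw [hfe, Finset.card_sdiff_of_subset (by simp)]
        rw [Finset.card_insert_of_notMem (by simp [hab]), Finset.card_singleton,
          Finset.card_univ, Fintype.card_fin]
        omega
    _ = ℓ * Fintype.card V ^ (ℓ - 1) := by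
        rw [Finset.sum_const, Finset.card_univ, Fintype.card_fin, smul_eq_mul]


private lemma arcCount_eq_zero {ℓ : ℕ} {A : V → V → Prop} {s t u v : V}
    (f : PathT ℓ A s t) (h : ¬ A u v) : arcCount ℓ f.1 u v = 0 := by
  rw [arcCount, Finset.card_eq_zero, Finset.filter_eq_empty_iff]
  rintro i - ⟨h1, h2⟩
  exact h (h1 ▸ h2 ▸ f.2.2.2.2 i)

private lemma pathT_isEmpty {ℓ : ℕ} (hℓ : 1 ≤ ℓ) (A : V → V → Prop) (s : V) :
    IsEmpty (PathT ℓ A s s) := by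
  constructor
  rintro ⟨f, hinj, h0, hlast, -⟩
  have : (0 : Fin (ℓ+1)) = Fin.last ℓ := hinj (by rw [h0, hlast])
  have := congrArg Fin.val this
  simp [Fin.last] at this
  omega

end aux

/-- The flow-redistribution lemma (Lemma 4.1): in a symmetric
digraph `D` on `n` vertices in which every ordered pair of distinct vertices is
joined by at least `α n^(ℓ-1)` directed `ℓ`-paths, any zero-sum vertex weighting
`ξ` with values in `[-β, β]` can be balanced by a flow `η` on the arcs with values
in `[0, 2βℓ/(αn)]`. -/
theorem stmt3 (ℓ : ℕ) (hℓ : 1 ≤ ℓ) (α : ℝ) (hα : 0 < α)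
    (V : Type) [Fintype V] [DecidableEq V]
    (A : V → V → Prop) (hsym : ∀ u v, A u v → A v u)
    (hpaths : ∀ s t : V, s ≠ t →
      α * (Fintype.card V : ℝ) ^ (ℓ - 1) ≤
        (Nat.card {f : Fin (ℓ + 1) → V // Function.Injective f ∧ f 0 = s ∧
          f (Fin.last ℓ) = t ∧ ∀ i : Fin ℓ, A (f i.castSucc) (f i.succ)} : ℝ))
    (β : ℝ) (hβ : 0 < β)
    (ξ : V → ℝ) (hξ : ∀ v, ξ v ∈ Set.Icc (-β) β) (hξ0 : ∑ v, ξ v = 0) :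
    ∃ η : V → V → ℝ,
      (∀ u v, A u v → η u v ∈ Set.Icc 0 (2 * β * ℓ / (α * (Fintype.card V : ℝ)))) ∧
      (∀ u v, ¬ A u v → η u v = 0) ∧
      ∀ v, ξ v + (∑ u, η u v) - (∑ u, η v u) = 0 := by
  classical
  cases isEmpty_or_nonempty V with
  | inl hV =>
    exact ⟨fun _ _ => 0, fun u => isEmptyElim u, fun u => isEmptyElim u,
      fun v => isEmptyElim v⟩
  | inr hV =>
  haveI : ∀ s t : V, Fintype (PathT ℓ A s t) := fun s t => Fintype.ofFinite _
  set n : ℕ := Fintype.card V with hn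
  have hn1 : 1 ≤ n := Fintype.card_pos
  have hnR : (0:ℝ) < (n:ℝ) := by exact_mod_cast hn1
  have hn0 : (n:ℝ) ≠ 0 := hnR.ne'
  have hq0 : (0:ℝ) < α * (n:ℝ)^(ℓ-1) := by positivity
  set c : V → V → ℝ := fun s t => (Fintype.card (PathT ℓ A s t) : ℝ) with hc
  have hcpos : ∀ s t : V, s ≠ t → α * (n:ℝ)^(ℓ-1) ≤ c s t := by
    intro s t hst
    have h := hpaths s t hst
    rwa [show (Nat.card {f : Fin (ℓ + 1) → V // Function.Injective f ∧ f 0 = s ∧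
          f (Fin.last ℓ) = t ∧ ∀ i : Fin ℓ, A (f i.castSucc) (f i.succ)})
        = Fintype.card (PathT ℓ A s t) from Nat.card_eq_fintype_card] at h
  have hcnn : ∀ s t : V, 0 ≤ c s t := fun s t => Nat.cast_nonneg _
  set S : V → V → V → V → ℝ :=
    fun s t u v => ∑ f : PathT ℓ A s t, (arcCount ℓ f.1 u v : ℝ) with hS
  have hSnn : ∀ s t u v : V, 0 ≤ S s t u v :=
    fun s t u v => Finset.sum_nonneg fun f _ => Nat.cast_nonneg _
  have hSdiag : ∀ s u v : V, S s s u v = 0 := by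
    intro s u v
    haveI := pathT_isEmpty hℓ A s
    simp [hS]
  set φ : V → V → ℝ := fun u v => ∑ s, ∑ t, (ξ s / n) * (S s t u v / c s t) with hφ
  -- φ vanishes off arcs
  have hφ0 : ∀ u v : V, ¬ A u v → φ u v = 0 := by
    intro u v h
    have hz : ∀ s t : V, S s t u v = 0 := by
      intro s t
      rw [hS]
      refine Finset.sum_eq_zero fun f _ => ?_
      rw [arcCount_eq_zero f h]
      norm_num
    simp [hφ, hz]
  -- the bound on φ
  have hφbd : ∀ u v : V, |φ u v| ≤ β * ℓ / (α * n) := by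
    intro u v
    have key : ∀ s t : V, |(ξ s / n) * (S s t u v / c s t)|
        ≤ (β / n) * (S s t u v / (α * (n:ℝ)^(ℓ-1))) := by
      intro s t
      by_cases hst : s = t
      · subst hst
        simp [hSdiag]
      · have hξs : |ξ s| ≤ β := abs_le.2 ⟨(hξ s).1, (hξ s).2⟩
        have h1 : |(ξ s / n) * (S s t u v / c s t)|
            = (|ξ s| / n) * (S s t u v / c s t) := by
          rw [abs_mul, abs_div, abs_div, Nat.abs_cast,
            abs_of_nonneg (hSnn s t u v), abs_of_nonneg (hcnn s t)]
        rw [h1]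
        gcongr
        exact hcpos s t hst
    have hcount : ∑ s, ∑ t, S s t u v ≤ (ℓ : ℝ) * (n:ℝ)^(ℓ-1) := by
      have hnat := count_bound ℓ A u v
      calc ∑ s, ∑ t, S s t u v
          = ((∑ s : V, ∑ t : V, ∑ f : PathT ℓ A s t, arcCount ℓ f.1 u v : ℕ) : ℝ) := by
            rw [hS]; push_cast; rfl
        _ ≤ ((ℓ * Fintype.card V ^ (ℓ - 1) : ℕ) : ℝ) := by exact_mod_cast hnat
        _ = (ℓ:ℝ) * (n:ℝ)^(ℓ-1) := by push_cast [hn]; ring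
    calc |φ u v| ≤ ∑ s, |∑ t, (ξ s / n) * (S s t u v / c s t)| := by
          rw [hφ]; exact Finset.abs_sum_le_sum_abs _ _
      _ ≤ ∑ s, ∑ t, |(ξ s / n) * (S s t u v / c s t)| :=
          Finset.sum_le_sum fun s _ => Finset.abs_sum_le_sum_abs _ _
      _ ≤ ∑ s, ∑ t, (β / n) * (S s t u v / (α * (n:ℝ)^(ℓ-1))) :=
          Finset.sum_le_sum fun s _ => Finset.sum_le_sum fun t _ => key s t
      _ = (β / ((n:ℝ) * (α * (n:ℝ)^(ℓ-1)))) * ∑ s, ∑ t, S s t u v := by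
          rw [Finset.mul_sum]
          refine Finset.sum_congr rfl fun s _ => ?_
          rw [Finset.mul_sum]
          refine Finset.sum_congr rfl fun t _ => ?_
          ring
      _ ≤ (β / ((n:ℝ) * (α * (n:ℝ)^(ℓ-1)))) * ((ℓ : ℝ) * (n:ℝ)^(ℓ-1)) := by
          have hnn : (0:ℝ) ≤ β / ((n:ℝ) * (α * (n:ℝ)^(ℓ-1))) := by positivity
          exact mul_le_mul_of_nonneg_left hcount hnn
      _ = β * ℓ / (α * n) := by
          field_simp
  -- the divergence identity
  have hdiv : ∀ v : V, (∑ u, φ u v) - (∑ u, φ v u) = - ξ v := by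
    intro v
    have hA1 : ∑ u, φ u v = ∑ s, ∑ t, (ξ s / n) *
        ((∑ f : PathT ℓ A s t, ∑ u, (arcCount ℓ f.1 u v : ℝ)) / c s t) := by
      rw [hφ, Finset.sum_comm]
      refine Finset.sum_congr rfl fun s _ => ?_
      rw [Finset.sum_comm]
      refine Finset.sum_congr rfl fun t _ => ?_
      rw [← Finset.mul_sum, ← Finset.sum_div, hS]
      congr 2
      exact Finset.sum_comm
    have hA2 : ∑ u, φ v u = ∑ s, ∑ t, (ξ s / n) *
        ((∑ f : PathT ℓ A s t, ∑ u, (arcCount ℓ f.1 v u : ℝ)) / c s t) := by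
      rw [hφ, Finset.sum_comm]
      refine Finset.sum_congr rfl fun s _ => ?_
      rw [Finset.sum_comm]
      refine Finset.sum_congr rfl fun t _ => ?_
      rw [← Finset.mul_sum, ← Finset.sum_div, hS]
      congr 2
      exact Finset.sum_comm
    have hterm : ∀ s t : V, (ξ s / n) *
        ((∑ f : PathT ℓ A s t, ∑ u, (arcCount ℓ f.1 u v : ℝ)) / c s t)
        - (ξ s / n) * ((∑ f : PathT ℓ A s t, ∑ u, (arcCount ℓ f.1 v u : ℝ)) / c s t)
        = (ξ s / n) * ((if t = v then (1:ℝ) else 0) - (if s = v then 1 else 0)) := by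
      intro s t
      rw [← mul_sub, ← sub_div, ← Finset.sum_sub_distrib]
      have hone : ∀ f : PathT ℓ A s t,
          (∑ u, (arcCount ℓ f.1 u v : ℝ)) - ∑ u, (arcCount ℓ f.1 v u : ℝ)
          = (if t = v then (1:ℝ) else 0) - (if s = v then 1 else 0) := by
        intro f
        rw [arcCount_div, f.2.2.2.1, f.2.2.1]
      rw [Finset.sum_congr rfl fun f _ => hone f, Finset.sum_const, Finset.card_univ,
        nsmul_eq_mul]
      by_cases hst : s = t
      · subst hst; simp
      · have hcne : c s t ≠ 0 := (hq0.trans_le (hcpos s t hst)).ne'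
        have hcc : (Fintype.card (PathT ℓ A s t) : ℝ) = c s t := by rw [hc]
        rw [hcc, mul_div_cancel_left₀ _ hcne]
    calc (∑ u, φ u v) - (∑ u, φ v u)
        = ∑ s, ∑ t, (ξ s / n) * ((if t = v then (1:ℝ) else 0)
            - (if s = v then 1 else 0)) := by
          rw [hA1, hA2, ← Finset.sum_sub_distrib]
          refine Finset.sum_congr rfl fun s _ => ?_
          rw [← Finset.sum_sub_distrib]
          exact Finset.sum_congr rfl fun t _ => hterm s t
      _ = - ξ v := by
          have h5 : ∀ s : V, ∑ t : V, (ξ s / n) * ((if t = v then (1:ℝ) else 0)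
              - (if s = v then 1 else 0))
              = ξ s / n - ξ s * (if s = v then 1 else 0) := by
            intro s
            rw [← Finset.mul_sum, Finset.sum_sub_distrib, Finset.sum_const,
              Finset.card_univ, Finset.sum_ite_eq' Finset.univ v (fun _ => (1:ℝ))]
            simp only [Finset.mem_univ, if_true, nsmul_eq_mul, mul_one]
            rw [hn]
            field_simp
          rw [Finset.sum_congr rfl fun s _ => h5 s, Finset.sum_sub_distrib,
            ← Finset.sum_div, hξ0]
          simp only [mul_ite, mul_one, mul_zero,
            Finset.sum_ite_eq' Finset.univ v ξ, Finset.mem_univ, if_true]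
          simp
  -- assemble η
  refine ⟨fun u v => if A u v then max (φ u v - φ v u) 0 else 0, ?_, ?_, ?_⟩
  · intro u v hA
    simp only [Set.mem_Icc, hA, if_true]
    constructor
    · exact le_max_right _ _
    · have h1 := hφbd u v
      have h2 := hφbd v u
      apply max_le
      · have e1 : φ u v ≤ |φ u v| := le_abs_self _
        have e2 : -|φ v u| ≤ φ v u := neg_abs_le _
        have e3 : 2 * β * ℓ / (α * (n:ℝ)) = β * ℓ / (α * n) + β * ℓ / (α * n) := by ring
        rw [e3]
        linarith
      · positivity
  · intro u v hA
    exact if_neg hA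
  · intro v
    have hpt : ∀ u : V, (if A u v then max (φ u v - φ v u) 0 else 0)
        - (if A v u then max (φ v u - φ u v) 0 else 0) = φ u v - φ v u := by
      intro u
      by_cases hA : A u v
      · have hA' : A v u := hsym u v hA
        rw [if_pos hA, if_pos hA']
        rcases le_total (φ u v - φ v u) 0 with h | h
        · rw [max_eq_right h, max_eq_left (by linarith)]
          ring
        · rw [max_eq_left h, max_eq_right (by linarith)]
          ring
      · have hA' : ¬ A v u := fun h => hA (hsym v u h)
        rw [if_neg hA, if_neg hA', hφ0 u v hA, hφ0 v u hA']
    have hsum : (∑ u, (if A u v then max (φ u v - φ v u) 0 else 0))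
        - (∑ u, (if A v u then max (φ v u - φ u v) 0 else 0))
        = (∑ u, φ u v) - (∑ u, φ v u) := by
      rw [← Finset.sum_sub_distrib, ← Finset.sum_sub_distrib]
      exact Finset.sum_congr rfl fun u _ => hpt u
    have hd := hdiv v
    show ξ v + (∑ u, (if A u v then max (φ u v - φ v u) 0 else 0))
        - (∑ u, (if A v u then max (φ v u - φ u v) 0 else 0)) = 0
    rw [sub_eq_iff_eq_add] at hsum
    linarith [hsum]
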